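/- If V_AB ≥ iΩ_AB and Γ_A ≥ iΩ_A (as Hermitian matrices), then the Schur complement V'_B := (V_AB + Γ_A ⊕ 0_B)/(V_A + Γ_A) satisfies V'_B ≥ iΩ_B. -/

import Mathlib

open Matrix ComplexOrder

/-- The standard symplectic form on `m` modes, in the `x|p` block representation. -/
noncomputable def Omg (m : ℕ) : Matrix (Fin m ⊕ Fin m) (Fin m ⊕ Fin m) ℝ :=
  fromBlocks 0 1 (-1) 0

private lemma psd_fromBlocks_zero {m n : Type*} [Fintype m] [Fintype n] [DecidableEq m]
    [DecidableEq n] {G : Matrix m m ℂ} (hG : G.PosSemidef) :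
    (fromBlocks G 0 0 (0 : Matrix n n ℂ)).PosSemidef := by
  obtain ⟨B, rfl⟩ : ∃ B : Matrix m m ℂ, G = Bᴴ * B := by
    open scoped MatrixOrder in
    exact CStarAlgebra.nonneg_iff_eq_star_mul_self.mp (Matrix.nonneg_iff_posSemidef.mpr hG)
  have h : fromBlocks (Bᴴ * B) 0 0 (0 : Matrix n n ℂ) =
      (fromBlocks B 0 0 (0 : Matrix n n ℂ))ᴴ * fromBlocks B 0 0 0 := by
    rw [fromBlocks_conjTranspose, fromBlocks_multiply]
    simp
  rw [h]
  exact Matrix.posSemidef_conjTranspose_mul_self _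

private lemma psd_posDef_of_isUnit_det {n : Type*} [Fintype n] [DecidableEq n]
    {A : Matrix n n ℂ} (hA : A.PosSemidef) (h : IsUnit A.det) : A.PosDef := by
  refine ⟨hA.1, fun x hx => lt_of_le_of_ne (hA.2 x) fun heq => hx ?_⟩
  have h0 : A *ᵥ x = 0 := (hA.dotProduct_mulVec_zero_iff x).mp (by
    simpa [dotProduct, mulVec, Finsupp.sum_fintype, Finset.mul_sum, mul_assoc] using heq.symm)
  have h1 : A⁻¹ *ᵥ (A *ᵥ x) = x := by
    rw [Matrix.mulVec_mulVec, Matrix.nonsing_inv_mul _ h, Matrix.one_mulVec]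
  rw [h0, Matrix.mulVec_zero] at h1
  exact Finsupp.coe_eq_zero.mp h1.symm

private lemma real_symm_of_psd {n : Type*} [Fintype n] [DecidableEq n] {Γ Ω : Matrix n n ℝ}
    (hΩ : Ωᵀ = -Ω)
    (hΓ : ((Γ.map Complex.ofReal) - Complex.I • Ω.map Complex.ofReal).PosSemidef) :
    Γᵀ = Γ := by
  ext i j
  have h0 := congrFun (congrFun hΓ.isHermitian j) i
  have hΩe : Ω j i = -Ω i j := congrFun (congrFun hΩ i) j
  simp only [conjTranspose_apply, Matrix.sub_apply, Matrix.map_apply, Matrix.smul_apply,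
    star_sub, star_mul', Complex.star_def, Complex.conj_ofReal, Complex.conj_I,
    smul_eq_mul] at h0
  have hre := congrArg Complex.re h0
  simp [hΩe] at hre
  simpa using hre.symm

private lemma psd_conj {n : Type*} [Fintype n] [DecidableEq n] {Γ Ω : Matrix n n ℝ}
    (hΩ : Ωᵀ = -Ω)
    (hΓ : ((Γ.map Complex.ofReal) - Complex.I • Ω.map Complex.ofReal).PosSemidef) :
    ((Γ.map Complex.ofReal) + Complex.I • Ω.map Complex.ofReal).PosSemidef := by
  have h1 := hΓ.transpose
  rwa [transpose_sub, transpose_smul, ← Matrix.transpose_map, ← Matrix.transpose_map,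
    real_symm_of_psd hΩ hΓ, hΩ,
    show (-Ω).map Complex.ofReal = -(Ω.map Complex.ofReal) by ext i j; simp, smul_neg,
    sub_neg_eq_add] at h1

/-- If `V_AB ≥ iΩ_AB` and `Γ_A ≥ iΩ_A` (as Hermitian matrices), then the Schur complement
`V'_B := (V_AB + Γ_A ⊕ 0_B)/(V_A + Γ_A)` satisfies `V'_B ≥ iΩ_B`. -/
theorem schur_qcm_of_measurement {a b : ℕ}
    (V : Matrix ((Fin a ⊕ Fin a) ⊕ (Fin b ⊕ Fin b)) ((Fin a ⊕ Fin a) ⊕ (Fin b ⊕ Fin b)) ℝ)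
    (Γ : Matrix (Fin a ⊕ Fin a) (Fin a ⊕ Fin a) ℝ)
    (hV : ((V.map Complex.ofReal) -
      Complex.I • (fromBlocks (Omg a) 0 0 (Omg b)).map Complex.ofReal).PosSemidef)
    (hΓ : ((Γ.map Complex.ofReal) - Complex.I • (Omg a).map Complex.ofReal).PosSemidef) :
    (((V.toBlocks₂₂ - V.toBlocks₂₁ * (V.toBlocks₁₁ + Γ)⁻¹ * V.toBlocks₁₂).map Complex.ofReal)
      - Complex.I • (Omg b).map Complex.ofReal).PosSemidef := by
  have hOmgT : ∀ m : ℕ, (Omg m)ᵀ = -(Omg m) := fun m => by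
    simp [Omg, fromBlocks_transpose, fromBlocks_neg]
  have hΩABT : (fromBlocks (Omg a) 0 0 (Omg b) : Matrix _ _ ℝ)ᵀ
      = -(fromBlocks (Omg a) 0 0 (Omg b)) := by
    simp [fromBlocks_transpose, fromBlocks_neg, hOmgT]
  have hVsymm : Vᵀ = V := real_symm_of_psd hΩABT hV
  have hΓT := psd_conj (hOmgT a) hΓ
  set A : Matrix (Fin a ⊕ Fin a) (Fin a ⊕ Fin a) ℝ := V.toBlocks₁₁ + Γ with hA
  set A' : Matrix (Fin a ⊕ Fin a) (Fin a ⊕ Fin a) ℂ := A.map Complex.ofReal with hA'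
  set B' : Matrix (Fin a ⊕ Fin a) (Fin b ⊕ Fin b) ℂ := V.toBlocks₁₂.map Complex.ofReal with hB'
  set D' : Matrix (Fin b ⊕ Fin b) (Fin b ⊕ Fin b) ℂ :=
    V.toBlocks₂₂.map Complex.ofReal - Complex.I • (Omg b).map Complex.ofReal with hD'
  have hC' : V.toBlocks₂₁.map Complex.ofReal = B'ᴴ := by
    ext i j
    have := congrFun (congrFun hVsymm (Sum.inr i)) (Sum.inl j)
    simp only [transpose_apply] at this
    simp [hB', conjTranspose_apply, Matrix.map_apply, toBlocks₂₁, toBlocks₁₂,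
      Complex.conj_ofReal, this]
  have hNpsd : (fromBlocks A' B' B'ᴴ D').PosSemidef := by
    have hsum := hV.add (psd_fromBlocks_zero hΓT)
    have heq : V.map Complex.ofReal -
        Complex.I • (fromBlocks (Omg a) 0 0 (Omg b)).map Complex.ofReal +
        fromBlocks (Γ.map Complex.ofReal + Complex.I • (Omg a).map Complex.ofReal) 0 0 0
        = fromBlocks A' B' B'ᴴ D' := by
      rw [← hC']
      ext (i | i) (j | j) <;>
        simp [hA', hA, hB', hD', Matrix.map_apply, Matrix.fromBlocks_apply₁₁,
          Matrix.fromBlocks_apply₁₂, Matrix.fromBlocks_apply₂₁, Matrix.fromBlocks_apply₂₂,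
          toBlocks₁₁, toBlocks₁₂, toBlocks₂₁, toBlocks₂₂]
    rwa [heq] at hsum
  by_cases hdet : IsUnit A.det
  · have hdetC : IsUnit A'.det := by
      have h2 := Complex.ofRealHom.map_det A
      rw [RingHom.mapMatrix_apply] at h2
      rw [hA', show (Complex.ofReal : ℝ → ℂ) = ⇑Complex.ofRealHom from rfl, ← h2]
      exact hdet.map _
    haveI := A'.invertibleOfIsUnitDet hdetC
    have hApsd : A'.PosSemidef := by
      have h3 := hNpsd.submatrix Sum.inl
      have h4 : (fromBlocks A' B' B'ᴴ D').submatrix Sum.inl Sum.inl = A' := rfl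
      rwa [h4] at h3
    have hApd := psd_posDef_of_isUnit_det hApsd hdetC
    have hschur := (Matrix.PosDef.fromBlocks₁₁ B' D' hApd).mp hNpsd
    have hinv : ((A⁻¹).map Complex.ofReal) = A'⁻¹ := by
      symm; apply Matrix.inv_eq_right_inv
      rw [hA', show (Complex.ofReal : ℝ → ℂ) = ⇑Complex.ofRealHom from rfl, ← Matrix.map_mul,
        Matrix.mul_nonsing_inv _ hdet]
      simp
    have hgoal : (V.toBlocks₂₂ - V.toBlocks₂₁ * A⁻¹ * V.toBlocks₁₂).map Complex.ofReal
        - Complex.I • (Omg b).map Complex.ofReal = D' - B'ᴴ * A'⁻¹ * B' := by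
      rw [← hinv, ← hC', hD', hB',
        show (Complex.ofReal : ℝ → ℂ) = ⇑Complex.ofRealHom from rfl,
        ← Matrix.map_mul, ← Matrix.map_mul]
      have : ∀ (M N : Matrix (Fin b ⊕ Fin b) (Fin b ⊕ Fin b) ℝ),
          (M - N).map ⇑Complex.ofRealHom = M.map ⇑Complex.ofRealHom - N.map ⇑Complex.ofRealHom :=
        fun M N => by ext i j; simp
      rw [this]
      abel
    rw [hgoal]
    exact hschur
  · have hinv0 : A⁻¹ = 0 := Matrix.nonsing_inv_apply_not_isUnit _ hdet
    rw [hinv0]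
    have h3 := hNpsd.submatrix Sum.inr
    have h4 : (fromBlocks A' B' B'ᴴ D').submatrix Sum.inr Sum.inr = D' := rfl
    rw [h4] at h3
    simpa [hD'] using h3
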